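/- Let G = (V, E) be a finite bipartite graph with bipartition V = A ∪ B, and let k be a natural number. Suppose that for every subset I ⊆ A we have |N(I)| ≥ k·|I|, where N(I) denotes the set of all vertices adjacent to at least one vertex of I. Then for every i ∈ A there exists a subset J_i ⊆ N(i) of size |J_i| = k such that the sets (J_i)_{i ∈ A} are pairwise disjoint. -/

import Mathlib

theorem statement8 {V : Type*} [Fintype V] [DecidableEq V] (G : SimpleGraph V)
    [DecidableRel G.Adj] (A B : Finset V)
    (hpart : ∀ v : V, v ∈ A ∨ v ∈ B) (hdisj : Disjoint A B)
    (hbip : ∀ u v : V, G.Adj u v → (u ∈ A ∧ v ∈ B) ∨ (u ∈ B ∧ v ∈ A))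
    (k : ℕ)
    (hexp : ∀ I ⊆ A, k * I.card ≤ (I.biUnion fun i => G.neighborFinset i).card) :
    ∃ J : V → Finset V,
      (∀ i ∈ A, J i ⊆ G.neighborFinset i ∧ (J i).card = k) ∧
      ∀ i ∈ A, ∀ j ∈ A, i ≠ j → Disjoint (J i) (J j) := by
  classical
  set t : ↥A × Fin k → Finset V := fun p => G.neighborFinset (p.1 : V) with ht
  have hall : ∀ s : Finset (↥A × Fin k), s.card ≤ (s.biUnion t).card := by
    intro s
    set I : Finset V := s.image (fun p => (p.1 : V)) with hI
    have hIA : I ⊆ A := by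
      intro x hx
      simp only [hI, Finset.mem_image] at hx
      obtain ⟨p, _, rfl⟩ := hx
      exact p.1.2
    have hbu : s.biUnion t = I.biUnion (fun i => G.neighborFinset i) := by
      ext x
      simp [hI, ht, Finset.mem_biUnion]
    have h1 : s.card ≤ k * I.card := by
      have : s.card ≤ (I ×ˢ (Finset.univ : Finset (Fin k))).card := by
        apply Finset.card_le_card_of_injOn (fun p => ((p.1 : V), p.2))
        · intro p hp
          rw [Finset.mem_coe, Finset.mem_product]
          exact ⟨Finset.mem_image.mpr ⟨p, hp, rfl⟩, Finset.mem_univ _⟩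
        · intro p _ q _ h
          simp only [Prod.mk.injEq] at h
          exact Prod.ext (Subtype.ext h.1) h.2
      simpa [Finset.card_product, Nat.mul_comm] using this
    exact h1.trans (hbu ▸ hexp I hIA)
  obtain ⟨f, hfinj, hf⟩ := (Finset.all_card_le_biUnion_card_iff_exists_injective t).mp hall
  refine ⟨fun i => if h : i ∈ A then Finset.image (fun m : Fin k => f (⟨i, h⟩, m)) Finset.univ
      else ∅, ?_, ?_⟩
  · intro i hi
    constructor
    · intro x hx
      simp only [dif_pos hi, Finset.mem_image] at hx
      obtain ⟨m, _, rfl⟩ := hx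
      exact hf (⟨i, hi⟩, m)
    · simp only []
      rw [dif_pos hi, Finset.card_image_of_injective _ (fun m m' h => by
        have := hfinj h; simpa using congrArg Prod.snd this), Finset.card_univ, Fintype.card_fin]
  · intro i hi j hj hij
    simp only []
    rw [dif_pos hi, dif_pos hj, Finset.disjoint_left]
    intro x hx hx'
    simp only [Finset.mem_image] at hx hx'
    obtain ⟨m, _, rfl⟩ := hx
    obtain ⟨m', _, h⟩ := hx'
    have h2 := hfinj h.symm
    have h3 : i = j := by simpa using congrArg (fun p => (p.1 : V)) h2
    exact hij h3
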